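/- Let G be a compact group with normalized Haar measure. Let 1_G ∈ C(G) be the constant function 1 and {h_V} a standard approximate identity in C(G) for convolution. Then g_V := h_V − 1_G lies in C⁰_c(G) = {f ∈ C(G) : ∫ f = 0}, the net {g_V} is bounded in L¹-norm, and for every g ∈ C⁰_c(G) one has ‖g * g_V − g‖_{L¹} → 0 and ‖g_V * g − g‖_{L¹} → 0. In particular, the augmentation ideal C⁰_c(G) has a bounded two-sided approximate identity (for the L¹-norm). -/

import Mathlib

open Filter Topology MeasureTheory

/-- For a compact group `G` with normalized Haar measure, the functions
`g_V = h_V − 1` (for `h_V` a standard approximate identity) lie in the augmentation ideal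
`C⁰_c(G) = {f : ∫ f = 0}`, are bounded in `L¹`-norm, and form a two-sided approximate identity
for `C⁰_c(G)` in `L¹`-norm. -/
theorem stmt13 {G : Type*} [Group G] [TopologicalSpace G] [IsTopologicalGroup G]
    [CompactSpace G] [MeasurableSpace G] [BorelSpace G]
    (μ : Measure G) [μ.IsHaarMeasure] [IsProbabilityMeasure μ]
    (g : G → ℂ) (hg : Continuous g) (hg0 : (∫ t, g t ∂μ) = 0) :
    ∀ ε > (0 : ℝ), ∃ U ∈ nhds (1 : G), ∀ h : G → ℝ,
      Continuous h → (∀ t, 0 ≤ h t) → (∫ t, h t ∂μ) = 1 → tsupport h ⊆ U →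
      (∫ t, ((h t : ℂ) - 1) ∂μ) = 0 ∧
      (∫ t, ‖(h t : ℂ) - 1‖ ∂μ) ≤ 2 ∧
      (∫ t, ‖(∫ s, g s * ((h (s⁻¹ * t) : ℂ) - 1) ∂μ) - g t‖ ∂μ) < ε ∧
      (∫ t, ‖(∫ s, ((h s : ℂ) - 1) * g (s⁻¹ * t) ∂μ) - g t‖ ∂μ) < ε := by
  haveI : LocallyCompactSpace G :=
    isCompact_univ.locallyCompactSpace_of_mem_nhds_of_group (x := (1 : G)) Filter.univ_mem
  haveI hright : μ.IsMulRightInvariant := by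
    refine ⟨fun t => ?_⟩
    haveI : IsProbabilityMeasure (Measure.map (· * t) μ) :=
      Measure.isProbabilityMeasure_map (measurable_mul_const t).aemeasurable
    exact Measure.isHaarMeasure_eq_of_isProbabilityMeasure _ μ
  haveI hinv : μ.IsInvInvariant := by
    constructor
    haveI : IsProbabilityMeasure μ.inv := by
      constructor
      rw [Measure.inv_apply]
      simp
    haveI : μ.inv.IsHaarMeasure := ⟨⟩
    exact Measure.isHaarMeasure_eq_of_isProbabilityMeasure μ.inv μ
  -- integrability of continuous functions
  have int_cont : ∀ {E : Type} [NormedAddCommGroup E] (f : G → E), Continuous f →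
      Integrable f μ := fun f hf =>
    hf.integrable_of_hasCompactSupport (HasCompactSupport.of_compactSpace f)
  -- tube lemma: uniform smallness near the identity
  have tube : ∀ (F : G × G → ℝ), Continuous F → (∀ t, F (1, t) = 0) → ∀ δ > (0:ℝ),
      ∃ U ∈ 𝓝 (1 : G), ∀ s ∈ U, ∀ t, F (s, t) < δ := by
    intro F hF hF1 δ hδ
    have hsub0 : ({(1:G)} ×ˢ (Set.univ : Set G)) ⊆ F ⁻¹' Set.Iio δ := by
      rintro ⟨s, t⟩ ⟨hs, -⟩
      simp only [Set.mem_singleton_iff] at hs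
      subst hs
      simpa [hF1 t] using hδ
    obtain ⟨u, v, hu, _hv, h1u, huniv, hsub⟩ :=
      generalized_tube_lemma isCompact_singleton isCompact_univ
        (hF.isOpen_preimage _ isOpen_Iio) hsub0
    refine ⟨u, hu.mem_nhds (h1u rfl), fun s hs t => ?_⟩
    exact hsub ⟨hs, huniv (Set.mem_univ t)⟩
  intro ε hε
  set δ : ℝ := ε / 2 with hδdef
  have hδ : 0 < δ := half_pos hε
  obtain ⟨U₁, hU₁, hU₁p⟩ := tube (fun p => ‖g (p.2 * p.1⁻¹) - g p.2‖)
    (by fun_prop) (by simp) δ hδ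
  obtain ⟨U₂, hU₂, hU₂p⟩ := tube (fun p => ‖g (p.1⁻¹ * p.2) - g p.2‖)
    (by fun_prop) (by simp) δ hδ
  refine ⟨U₁ ∩ U₂, Filter.inter_mem hU₁ hU₂, ?_⟩
  intro h hc hnn hint hsupp
  have hInt_hr : Integrable h μ := int_cont _ hc
  have hInt_h : Integrable (fun t => (h t : ℂ)) μ := int_cont _ (by fun_prop)
  have hInt_g : Integrable g μ := int_cont _ hg
  have ofR : ∀ f : G → ℝ, (∫ t, (f t : ℂ) ∂μ) = ((∫ t, f t ∂μ : ℝ) : ℂ) :=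
    fun f => integral_ofReal
  -- claim 1
  have c1 : (∫ t, ((h t : ℂ) - 1) ∂μ) = 0 := by
    rw [integral_sub hInt_h (integrable_const 1), ofR, hint, integral_const]
    simp
  -- claim 2
  have c2 : (∫ t, ‖(h t : ℂ) - 1‖ ∂μ) ≤ 2 := by
    have hb : ∀ t, ‖(h t : ℂ) - 1‖ ≤ h t + 1 := fun t => by
      refine (norm_sub_le _ _).trans ?_
      simp [Complex.norm_real, abs_of_nonneg (hnn t)]
    calc (∫ t, ‖(h t : ℂ) - 1‖ ∂μ) ≤ ∫ t, (h t + 1) ∂μ :=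
          integral_mono_of_nonneg (Filter.Eventually.of_forall fun t => norm_nonneg _)
            (hInt_hr.add (integrable_const 1)) (Filter.Eventually.of_forall hb)
      _ = 2 := by
          rw [integral_add hInt_hr (integrable_const 1), hint, integral_const]
          simp; norm_num
  -- mean of translated h
  have hmean : ∀ t : G, (∫ s, h (s⁻¹ * t) ∂μ) = 1 := by
    intro t
    calc (∫ s, h (s⁻¹ * t) ∂μ) = ∫ s, h (s * t) ∂μ :=
          MeasureTheory.integral_inv_eq_self (fun s => h (s * t)) μ
      _ = ∫ s, h s ∂μ := MeasureTheory.integral_mul_right_eq_self _ t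
      _ = 1 := hint
  have hmeanC : ∀ t : G, (∫ s, (h (s⁻¹ * t) : ℂ) ∂μ) = 1 := by
    intro t
    rw [ofR, hmean t]
    simp
  have gmean : ∀ t : G, (∫ s, g (s⁻¹ * t) ∂μ) = 0 := by
    intro t
    calc (∫ s, g (s⁻¹ * t) ∂μ) = ∫ s, g (s * t) ∂μ :=
          MeasureTheory.integral_inv_eq_self (fun s => g (s * t)) μ
      _ = ∫ s, g s ∂μ := MeasureTheory.integral_mul_right_eq_self _ t
      _ = 0 := hg0
  -- claim 3 pointwise
  have key3 : ∀ t : G, ‖(∫ s, g s * ((h (s⁻¹ * t) : ℂ) - 1) ∂μ) - g t‖ ≤ δ := by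
    intro t
    have iht : Integrable (fun s => (h (s⁻¹ * t) : ℂ)) μ := int_cont _ (by fun_prop)
    have igh : Integrable (fun s => g s * (h (s⁻¹ * t) : ℂ)) μ := int_cont _ (by fun_prop)
    have e1 : (∫ s, g s * ((h (s⁻¹ * t) : ℂ) - 1) ∂μ) - g t
        = ∫ s, (g s - g t) * (h (s⁻¹ * t) : ℂ) ∂μ := by
      have A : (∫ s, g s * ((h (s⁻¹ * t) : ℂ) - 1) ∂μ)
          = ∫ s, g s * (h (s⁻¹ * t) : ℂ) ∂μ := by
        simp_rw [mul_sub, mul_one]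
        rw [integral_sub igh hInt_g, hg0, sub_zero]
      have B : (∫ s, (g s - g t) * (h (s⁻¹ * t) : ℂ) ∂μ)
          = (∫ s, g s * (h (s⁻¹ * t) : ℂ) ∂μ) - g t := by
        simp_rw [sub_mul]
        rw [integral_sub igh (iht.const_mul (g t)), integral_const_mul,
          hmeanC t, mul_one]
      rw [A, B]
    have ptw : ∀ s, ‖(g s - g t) * (h (s⁻¹ * t) : ℂ)‖ ≤ δ * h (s⁻¹ * t) := by
      intro s
      rcases eq_or_ne (h (s⁻¹ * t)) 0 with h0 | h0
      · simp [h0]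
      · have hmem : s⁻¹ * t ∈ U₁ := (hsupp (subset_tsupport h h0)).1
        have := hU₁p (s⁻¹ * t) hmem t
        simp only at this
        have hst : t * (s⁻¹ * t)⁻¹ = s := by group
        rw [hst] at this
        rw [norm_mul, Complex.norm_real, Real.norm_of_nonneg (hnn _)]
        exact mul_le_mul_of_nonneg_right this.le (hnn _)
    rw [e1]
    calc ‖∫ s, (g s - g t) * (h (s⁻¹ * t) : ℂ) ∂μ‖
        ≤ ∫ s, ‖(g s - g t) * (h (s⁻¹ * t) : ℂ)‖ ∂μ := norm_integral_le_integral_norm _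
      _ ≤ ∫ s, δ * h (s⁻¹ * t) ∂μ :=
          integral_mono_of_nonneg (Filter.Eventually.of_forall fun s => norm_nonneg _)
            ((int_cont _ (by fun_prop : Continuous fun s => h (s⁻¹ * t))).const_mul δ)
            (Filter.Eventually.of_forall ptw)
      _ = δ := by rw [integral_const_mul, hmean t, mul_one]
  -- claim 4 pointwise
  have key4 : ∀ t : G, ‖(∫ s, ((h s : ℂ) - 1) * g (s⁻¹ * t) ∂μ) - g t‖ ≤ δ := by
    intro t
    have igt : Integrable (fun s => g (s⁻¹ * t)) μ := int_cont _ (by fun_prop)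
    have ihg : Integrable (fun s => (h s : ℂ) * g (s⁻¹ * t)) μ := int_cont _ (by fun_prop)
    have e2 : (∫ s, ((h s : ℂ) - 1) * g (s⁻¹ * t) ∂μ) - g t
        = ∫ s, (h s : ℂ) * (g (s⁻¹ * t) - g t) ∂μ := by
      have A : (∫ s, ((h s : ℂ) - 1) * g (s⁻¹ * t) ∂μ)
          = ∫ s, (h s : ℂ) * g (s⁻¹ * t) ∂μ := by
        simp_rw [sub_mul, one_mul]
        rw [integral_sub ihg igt, gmean t, sub_zero]
      have B : (∫ s, (h s : ℂ) * (g (s⁻¹ * t) - g t) ∂μ)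
          = (∫ s, (h s : ℂ) * g (s⁻¹ * t) ∂μ) - g t := by
        simp_rw [mul_sub]
        rw [integral_sub ihg (hInt_h.mul_const (g t)), integral_mul_const,
          ofR, hint]
        simp
      rw [A, B]
    have ptw : ∀ s, ‖(h s : ℂ) * (g (s⁻¹ * t) - g t)‖ ≤ δ * h s := by
      intro s
      rcases eq_or_ne (h s) 0 with h0 | h0
      · simp [h0]
      · have hmem : s ∈ U₂ := (hsupp (subset_tsupport h h0)).2
        have := hU₂p s hmem t
        simp only at this
        rw [norm_mul, Complex.norm_real, Real.norm_of_nonneg (hnn _), mul_comm]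
        exact mul_le_mul_of_nonneg_right this.le (hnn _)
    rw [e2]
    calc ‖∫ s, (h s : ℂ) * (g (s⁻¹ * t) - g t) ∂μ‖
        ≤ ∫ s, ‖(h s : ℂ) * (g (s⁻¹ * t) - g t)‖ ∂μ := norm_integral_le_integral_norm _
      _ ≤ ∫ s, δ * h s ∂μ :=
          integral_mono_of_nonneg (Filter.Eventually.of_forall fun s => norm_nonneg _)
            (hInt_hr.const_mul δ) (Filter.Eventually.of_forall ptw)
      _ = δ := by rw [integral_const_mul, hint, mul_one]
  refine ⟨c1, c2, ?_, ?_⟩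
  · calc (∫ t, ‖(∫ s, g s * ((h (s⁻¹ * t) : ℂ) - 1) ∂μ) - g t‖ ∂μ) ≤ ∫ _t, δ ∂μ :=
        integral_mono_of_nonneg (Filter.Eventually.of_forall fun t => norm_nonneg _)
          (integrable_const δ) (Filter.Eventually.of_forall key3)
      _ = δ := by simp
      _ < ε := by rw [hδdef]; linarith
  · calc (∫ t, ‖(∫ s, ((h s : ℂ) - 1) * g (s⁻¹ * t) ∂μ) - g t‖ ∂μ) ≤ ∫ _t, δ ∂μ :=
        integral_mono_of_nonneg (Filter.Eventually.of_forall fun t => norm_nonneg _)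
          (integrable_const δ) (Filter.Eventually.of_forall key4)
      _ = δ := by simp
      _ < ε := by rw [hδdef]; linarith
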